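/- For positive definite Hermitian matrices A, B and any unitary matrix V, one has tr((A^{1/2} - B^{1/2} V)* (A^{1/2} - B^{1/2} V)) ≥ tr(A) + tr(B) - 2·tr((A^{1/2} B A^{1/2})^{1/2}), with equality when V = B^{-1/2} A^{-1/2} (A^{1/2} B A^{1/2})^{1/2}. -/

import Mathlib

open Matrix
open scoped ComplexOrder
set_option maxHeartbeats 1000000

noncomputable def Matrix.PosSemidef.sqrt {n 𝕜 : Type*} [Fintype n] [DecidableEq n] [RCLike 𝕜]
    {A : Matrix n n 𝕜} (hA : A.PosSemidef) : Matrix n n 𝕜 :=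
  hA.1.eigenvectorUnitary.1 * diagonal ((↑) ∘ (Real.sqrt ∘ hA.1.eigenvalues)) *
  (star hA.1.eigenvectorUnitary : Matrix n n 𝕜)

lemma Matrix.PosSemidef.sqrt_mul_self {n 𝕜 : Type*} [Fintype n] [DecidableEq n] [RCLike 𝕜]
    {A : Matrix n n 𝕜} (hA : A.PosSemidef) : hA.sqrt * hA.sqrt = A := by
  have hU : (star hA.1.eigenvectorUnitary : Matrix n n 𝕜) * hA.1.eigenvectorUnitary.1 = 1 :=
    Unitary.coe_star_mul_self _
  have hD : diagonal ((↑) ∘ (Real.sqrt ∘ hA.1.eigenvalues)) *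
      diagonal ((↑) ∘ (Real.sqrt ∘ hA.1.eigenvalues)) =
      diagonal (RCLike.ofReal ∘ hA.1.eigenvalues : n → 𝕜) := by
    rw [diagonal_mul_diagonal]
    congr 1
    funext i
    simp only [Function.comp_apply]
    rw [← RCLike.ofReal_mul, Real.mul_self_sqrt (hA.eigenvalues_nonneg i)]
  conv_rhs => rw [hA.1.spectral_theorem, Unitary.conjStarAlgAut_apply]
  unfold Matrix.PosSemidef.sqrt
  calc _ = hA.1.eigenvectorUnitary.1 * diagonal ((↑) ∘ (Real.sqrt ∘ hA.1.eigenvalues)) *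
      ((star hA.1.eigenvectorUnitary : Matrix n n 𝕜) * hA.1.eigenvectorUnitary.1) *
      diagonal ((↑) ∘ (Real.sqrt ∘ hA.1.eigenvalues)) *
      (star hA.1.eigenvectorUnitary : Matrix n n 𝕜) := by simp only [mul_assoc]
    _ = _ := by rw [hU, mul_one, mul_assoc _ (diagonal _) (diagonal _), hD]

lemma Matrix.PosSemidef.posSemidef_sqrt {n 𝕜 : Type*} [Fintype n] [DecidableEq n] [RCLike 𝕜]
    {A : Matrix n n 𝕜} (hA : A.PosSemidef) : hA.sqrt.PosSemidef := by
  unfold Matrix.PosSemidef.sqrt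
  have hd : (diagonal ((↑) ∘ (Real.sqrt ∘ hA.1.eigenvalues)) : Matrix n n 𝕜).PosSemidef := by
    rw [posSemidef_diagonal_iff]
    intro i
    simp only [Function.comp_apply]
    exact_mod_cast Real.sqrt_nonneg _
  have := hd.mul_mul_conjTranspose_same (hA.1.eigenvectorUnitary.1)
  simpa [star_eq_conjTranspose] using this

lemma aux_trace_re_nonneg {n : ℕ} {M : Matrix (Fin n) (Fin n) ℂ} (hM : M.PosSemidef) :
    0 ≤ M.trace.re := by
  have h : ∀ i, 0 ≤ (M i i).re := by
    intro i
    have := hM.re_dotProduct_nonneg (Pi.single i 1)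
    simpa [dotProduct, mulVec, Pi.single_apply] using this
  rw [Matrix.trace, Complex.re_sum]
  exact Finset.sum_nonneg fun i _ => h i

lemma aux_re_trace_le {n : ℕ} {S U : Matrix (Fin n) (Fin n) ℂ} (hS : S.PosSemidef)
    (hU : U * Uᴴ = 1) : ((S * U).trace).re ≤ S.trace.re := by
  have hM : ((1 - U)ᴴ * S * (1 - U)).PosSemidef := hS.conjTranspose_mul_mul_same _
  have h0 : 0 ≤ ((1 - U)ᴴ * S * (1 - U)).trace.re := aux_trace_re_nonneg hM
  have h1 : (1 - U)ᴴ * S * (1 - U) = S - S * U - Uᴴ * S + Uᴴ * (S * U) := by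
    rw [conjTranspose_sub, conjTranspose_one]
    noncomm_ring
  have h2 : (Uᴴ * S).trace = star ((S * U).trace) := by
    rw [← trace_conjTranspose, conjTranspose_mul, hS.isHermitian.eq]
  have h3 : (Uᴴ * (S * U)).trace = S.trace := by
    rw [trace_mul_comm, mul_assoc, hU, mul_one]
  rw [h1, trace_add, trace_sub, trace_sub, h2, h3] at h0
  have h4 : (star ((S * U).trace)).re = ((S * U).trace).re := by
    simp [Complex.star_def]
  simp only [Complex.add_re, Complex.sub_re, h4] at h0
  linarith

theorem allpass_minimizes_factor_distance (n : ℕ)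
    (A B : Matrix (Fin n) (Fin n) ℂ) (hA : A.PosDef) (hB : B.PosDef)
    (hS : (hA.posSemidef.sqrt * B * hA.posSemidef.sqrt).PosSemidef) :
    (∀ V ∈ Matrix.unitaryGroup (Fin n) ℂ,
        A.trace.re + B.trace.re - 2 * hS.sqrt.trace.re ≤
          (((hA.posSemidef.sqrt - hB.posSemidef.sqrt * V)ᴴ *
            (hA.posSemidef.sqrt - hB.posSemidef.sqrt * V)).trace).re) ∧
      (((hA.posSemidef.sqrt -
          hB.posSemidef.sqrt * (hB.posSemidef.sqrt⁻¹ * hA.posSemidef.sqrt⁻¹ * hS.sqrt))ᴴ *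
        (hA.posSemidef.sqrt -
          hB.posSemidef.sqrt * (hB.posSemidef.sqrt⁻¹ * hA.posSemidef.sqrt⁻¹ * hS.sqrt))).trace).re =
        A.trace.re + B.trace.re - 2 * hS.sqrt.trace.re := by
  set P := hA.posSemidef.sqrt with hPdef
  set Q := hB.posSemidef.sqrt with hQdef
  set S := hS.sqrt with hSdef
  have hPP : P * P = A := hA.posSemidef.sqrt_mul_self
  have hQQ : Q * Q = B := hB.posSemidef.sqrt_mul_self
  have hSS : S * S = P * B * P := hS.sqrt_mul_self
  have hPH : Pᴴ = P := hA.posSemidef.posSemidef_sqrt.isHermitian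
  have hQH : Qᴴ = Q := hB.posSemidef.posSemidef_sqrt.isHermitian
  have hSH : Sᴴ = S := hS.posSemidef_sqrt.isHermitian
  have hSpsd : S.PosSemidef := hS.posSemidef_sqrt
  have hPdet : IsUnit P.det := by
    have h : P.det * P.det = A.det := by rw [← det_mul, hPP]
    refine isUnit_iff_ne_zero.2 fun hz => hA.det_pos.ne' ?_
    rw [← h, hz, mul_zero]
  have hQdet : IsUnit Q.det := by
    have h : Q.det * Q.det = B.det := by rw [← det_mul, hQQ]
    refine isUnit_iff_ne_zero.2 fun hz => hB.det_pos.ne' ?_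
    rw [← h, hz, mul_zero]
  have hSdet : IsUnit S.det := by
    have h : S.det * S.det = P.det * B.det * P.det := by
      rw [← det_mul, hSS, det_mul, det_mul]
    refine isUnit_iff_ne_zero.2 fun hz => ?_
    rw [hz, mul_zero] at h
    exact (mul_ne_zero (mul_ne_zero hPdet.ne_zero hB.det_pos.ne') hPdet.ne_zero) h.symm
  have hPi : P * P⁻¹ = 1 := mul_nonsing_inv _ hPdet
  have hPi' : P⁻¹ * P = 1 := nonsing_inv_mul _ hPdet
  have hQi : Q * Q⁻¹ = 1 := mul_nonsing_inv _ hQdet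
  have hSi : S * S⁻¹ = 1 := mul_nonsing_inv _ hSdet
  have hSi' : S⁻¹ * S = 1 := nonsing_inv_mul _ hSdet
  have hPiH : (P⁻¹)ᴴ = P⁻¹ := by rw [conjTranspose_nonsing_inv, hPH]
  have hSiH : (S⁻¹)ᴴ = S⁻¹ := by rw [conjTranspose_nonsing_inv, hSH]
  constructor
  · -- inequality
    intro V hV
    have hVV : V * Vᴴ = 1 := by
      have := Matrix.mem_unitaryGroup_iff.mp hV
      simpa [Matrix.star_eq_conjTranspose] using this
    -- expansion of the quadratic
    have hexp : (P - Q * V)ᴴ * (P - Q * V)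
        = P * P - P * (Q * V) - (Q * V)ᴴ * P + (Q * V)ᴴ * (Q * V) := by
      rw [conjTranspose_sub, hPH]
      noncomm_ring
    have t1 : ((Q * V)ᴴ * (Q * V)).trace = B.trace := by
      rw [trace_mul_comm, conjTranspose_mul, hQH, mul_assoc, ← mul_assoc V,
        hVV, one_mul, hQQ]
    have t2 : ((Q * V)ᴴ * P).trace = star ((P * (Q * V)).trace) := by
      rw [← trace_conjTranspose]
      refine congrArg Matrix.trace ?_
      simp only [conjTranspose_mul, hPH, hQH, mul_assoc]
    -- the key bound
    set U : Matrix (Fin n) (Fin n) ℂ := S⁻¹ * (P * (Q * V)) with hUdef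
    have hSU : S * U = P * (Q * V) := by
      rw [hUdef, ← mul_assoc, hSi, one_mul]
    have hUU : U * Uᴴ = 1 := by
      have hUH : Uᴴ = Vᴴ * (Q * (P * S⁻¹)) := by
        rw [hUdef]
        simp only [conjTranspose_mul, hSiH, hPH, hQH, mul_assoc]
      rw [hUdef, hUH]
      have e1 : ∀ X : Matrix (Fin n) (Fin n) ℂ, V * (Vᴴ * X) = X := fun X => by
        rw [← mul_assoc, hVV, one_mul]
      have e2 : ∀ X : Matrix (Fin n) (Fin n) ℂ, Q * (Q * X) = B * X := fun X => by
        rw [← mul_assoc, hQQ]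
      simp only [mul_assoc]
      rw [e1, e2]
      have e3 : P * (B * (P * S⁻¹)) = S * (S * S⁻¹) := by
        simp only [← mul_assoc]
        rw [hSS]
      rw [e3, hSi, mul_one, hSi']
    have hkey : ((P * (Q * V)).trace).re ≤ S.trace.re := by
      rw [← hSU]
      exact aux_re_trace_le hSpsd hUU
    rw [hexp, trace_add, trace_sub, trace_sub, hPP, t1, t2]
    have h4 : (star ((P * (Q * V)).trace)).re = ((P * (Q * V)).trace).re := by
      simp [Complex.star_def]
    simp only [Complex.add_re, Complex.sub_re, h4]
    linarith
  · -- equality case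
    have hQc : Q * (Q⁻¹ * P⁻¹ * S) = P⁻¹ * S := by
      simp only [← mul_assoc, hQi, one_mul]
    rw [hQc]
    have hXH : (P - P⁻¹ * S)ᴴ = P - S * P⁻¹ := by
      rw [conjTranspose_sub, conjTranspose_mul, hPiH, hSH, hPH]
    have hexp : (P - P⁻¹ * S)ᴴ * (P - P⁻¹ * S)
        = P * P - P * (P⁻¹ * S) - S * P⁻¹ * P + S * P⁻¹ * (P⁻¹ * S) := by
      rw [hXH]
      noncomm_ring
    have e1 : P * (P⁻¹ * S) = S := by rw [← mul_assoc, hPi, one_mul]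
    have e2 : S * P⁻¹ * P = S := by rw [mul_assoc, hPi', mul_one]
    have e3 : (S * P⁻¹ * (P⁻¹ * S)).trace = B.trace := by
      rw [trace_mul_comm, ← mul_assoc, mul_assoc (P⁻¹ * S), mul_assoc P⁻¹,
        ← mul_assoc S, hSS]
      have : P⁻¹ * (P * B * P * P⁻¹) = B := by
        simp only [← mul_assoc, hPi', one_mul]
        rw [mul_assoc, hPi, mul_one]
      rw [this]
    rw [hexp, trace_add, trace_sub, trace_sub, hPP, e1, e2, e3]
    simp only [Complex.add_re, Complex.sub_re]
    ring
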